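/- Let X : Δᵒᵖ → Set be a continuous simplicial set. Then the map ⟨d₁, d₀⟩ : X₁ → X₀ × X₀, sending a 1-simplex f to the pair of its faces (d₁ f, d₀ f), is injective. -/

import Mathlib

open CategoryTheory Limits Opposite

/-- A simplicial set `X : Δᵒᵖ ⥤ Type` is *continuous* if it preserves all limits that
exist in `Δᵒᵖ`; equivalently, it takes colimits in `Δ` to limits in `Set`. -/
def IsContinuousSSet (X : SimplexCategoryᵒᵖ ⥤ Type) : Prop :=
  ∀ ⦃J : Type⦄ [SmallCategory J] (D : J ⥤ SimplexCategoryᵒᵖ) (c : Cone D),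
    Nonempty (IsLimit c) → Nonempty (IsLimit (X.mapCone c))

inductive JO : Type | a | b | m | m2
deriving DecidableEq

def JO.leB : JO → JO → Bool
  | x, y => x == y || ((x == .m || x == .m2) && (y == .a || y == .b))

instance : Preorder JO where
  le x y := JO.leB x y = true
  le_refl x := by cases x <;> rfl
  le_trans x y z h1 h2 := by
    cases x <;> cases y <;> cases z <;>
      first
        | rfl
        | exact Bool.noConfusion h1
        | exact Bool.noConfusion h2

instance (x y : JO) : Decidable (x ≤ y) :=
  inferInstanceAs (Decidable (JO.leB x y = true))

def DD : JO ⥤ SimplexCategoryᵒᵖ where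
  obj x := match x with
    | .a => op (SimplexCategory.mk 0)
    | .b => op (SimplexCategory.mk 0)
    | .m => op (SimplexCategory.mk 1)
    | .m2 => op (SimplexCategory.mk 1)
  map {x y} f := match x, y, f with
    | .a, .a, _ => 𝟙 _
    | .b, .b, _ => 𝟙 _
    | .m, .m, _ => 𝟙 _
    | .m2, .m2, _ => 𝟙 _
    | .m, .a, _ => (SimplexCategory.δ 1).op
    | .m, .b, _ => (SimplexCategory.δ 0).op
    | .m2, .a, _ => (SimplexCategory.δ 1).op
    | .m2, .b, _ => (SimplexCategory.δ 0).op
    | .a, .b, f => absurd (leOfHom f) (by decide)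
    | .a, .m, f => absurd (leOfHom f) (by decide)
    | .a, .m2, f => absurd (leOfHom f) (by decide)
    | .b, .a, f => absurd (leOfHom f) (by decide)
    | .b, .m, f => absurd (leOfHom f) (by decide)
    | .b, .m2, f => absurd (leOfHom f) (by decide)
    | .m, .m2, f => absurd (leOfHom f) (by decide)
    | .m2, .m, f => absurd (leOfHom f) (by decide)
  map_id x := by cases x <;> rfl
  map_comp {x y z} f g := by
    cases x <;> cases y <;> cases z <;>
      first
        | exact absurd (leOfHom f) (by decide)
        | exact absurd (leOfHom g) (by decide)
        | exact (Category.id_comp _).symm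
        | exact (Category.comp_id _).symm

def cc : Cone DD where
  pt := op (SimplexCategory.mk 1)
  π := {
    app := fun j => match j with
      | .a => (SimplexCategory.δ 1).op
      | .b => (SimplexCategory.δ 0).op
      | .m => 𝟙 _
      | .m2 => 𝟙 _
    naturality := by
      intro x y f
      cases x <;> cases y <;>
        first
          | exact absurd (leOfHom f) (by decide)
          | rfl
          | exact (Category.id_comp _).trans (Category.comp_id _).symm }

lemma hom_ext1 {x : SimplexCategory} {u v : SimplexCategory.mk 1 ⟶ x}
    (h1 : SimplexCategory.δ 1 ≫ u = SimplexCategory.δ 1 ≫ v)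
    (h0 : SimplexCategory.δ 0 ≫ u = SimplexCategory.δ 0 ≫ v) : u = v := by
  apply SimplexCategory.Hom.ext
  apply OrderHom.ext
  funext i
  fin_cases i
  · have := congrArg (fun (w : SimplexCategory.mk 1 ⟶ x) => w.toOrderHom 0) (rfl : u = u)
    have h := congrArg (fun (w : SimplexCategory.mk 0 ⟶ x) => w.toOrderHom 0) h1
    simpa [SimplexCategory.δ, SimplexCategory.Hom.comp, Fin.succAbove] using h
  · have h := congrArg (fun (w : SimplexCategory.mk 0 ⟶ x) => w.toOrderHom 0) h0
    simpa [SimplexCategory.δ, SimplexCategory.Hom.comp, Fin.succAbove] using h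

def ccIsLimit : IsLimit cc where
  lift s := s.π.app .m
  fac s j := by
    cases j with
    | a => exact s.w (homOfLE (by decide : JO.m ≤ JO.a))
    | b => exact s.w (homOfLE (by decide : JO.m ≤ JO.b))
    | m => exact Category.comp_id _
    | m2 =>
      have ha : s.π.app JO.m ≫ (SimplexCategory.δ 1).op = s.π.app JO.a :=
        s.w (homOfLE (by decide : JO.m ≤ JO.a))
      have ha' : s.π.app JO.m2 ≫ (SimplexCategory.δ 1).op = s.π.app JO.a :=
        s.w (homOfLE (by decide : JO.m2 ≤ JO.a))
      have hb : s.π.app JO.m ≫ (SimplexCategory.δ 0).op = s.π.app JO.b :=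
        s.w (homOfLE (by decide : JO.m ≤ JO.b))
      have hb' : s.π.app JO.m2 ≫ (SimplexCategory.δ 0).op = s.π.app JO.b :=
        s.w (homOfLE (by decide : JO.m2 ≤ JO.b))
      have key : s.π.app JO.m = s.π.app JO.m2 := by
        apply Quiver.Hom.unop_inj
        apply hom_ext1
        · exact (congrArg Quiver.Hom.unop ha).trans (congrArg Quiver.Hom.unop ha').symm
        · exact (congrArg Quiver.Hom.unop hb).trans (congrArg Quiver.Hom.unop hb').symm
      exact (Category.comp_id _).trans key
  uniq s t h := (Category.comp_id t).symm.trans (h JO.m)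

/-- Let `X : Δᵒᵖ → Set` be a continuous simplicial set. Then the map
`⟨d₁, d₀⟩ : X₁ → X₀ × X₀`, sending a `1`-simplex `f` to the pair of its faces
`(d₁ f, d₀ f)`, is injective. -/
theorem d1_d0_injective (X : SimplexCategoryᵒᵖ ⥤ Type) (hX : IsContinuousSSet X) :
    Function.Injective (fun f : X.obj (op (SimplexCategory.mk 1)) =>
      (X.map (SimplexCategory.δ 1).op f, X.map (SimplexCategory.δ 0).op f)) := by
  intro f g h
  have h1 : X.map (SimplexCategory.δ 1).op f = X.map (SimplexCategory.δ 1).op g :=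
    congrArg Prod.fst h
  have h0 : X.map (SimplexCategory.δ 0).op f = X.map (SimplexCategory.δ 0).op g :=
    congrArg Prod.snd h
  obtain ⟨L⟩ := hX DD cc ⟨ccIsLimit⟩
  let s : Cone (DD ⋙ X) := {
    pt := PUnit
    π := {
      app := fun j => match j with
        | .a => TypeCat.ofHom fun _ => X.map (SimplexCategory.δ 1).op f
        | .b => TypeCat.ofHom fun _ => X.map (SimplexCategory.δ 0).op f
        | .m => TypeCat.ofHom fun _ => f
        | .m2 => TypeCat.ofHom fun _ => g
      naturality := by
        intro x y φ
        cases x <;> cases y <;>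
          first
            | exact absurd (leOfHom φ) (by decide)
            | rfl
            | (ext t; exact (congrFun (X.map_id _) _).symm)
            | (ext t; exact h1)
            | (ext t; exact h0)
            | (ext t; simp [DD, h1, h0]) } }
  have hm : L.lift s PUnit.unit = f := by
    have := ConcreteCategory.congr_hom (L.fac s JO.m) PUnit.unit
    have e : (X.mapCone cc).π.app JO.m = 𝟙 _ := X.map_id _
    rw [e] at this
    exact this
  have hm2 : L.lift s PUnit.unit = g := by
    have := ConcreteCategory.congr_hom (L.fac s JO.m2) PUnit.unit
    have e : (X.mapCone cc).π.app JO.m2 = 𝟙 _ := X.map_id _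
    rw [e] at this
    exact this
  exact hm.symm.trans hm2
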